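/- Let $1\le p<\infty$, $(w,v)\in A_p^{+,d}(\mathcal{R})$ on $\mathbb{R}^n$, and $\mu>0$. Let $E$ be measurable with $0<|E|<\infty$ and let $\{Q_j\}_{j\in\Gamma_\mu}$ be a pairwise disjoint family of dyadic cubes satisfying $\mu < |E\cap Q_j^+|/|Q_j| \le 2\mu$ for every $j$. Then $\sum_{j\in\Gamma_\mu} w(Q_j) \le 2^{n+p+2}[(w,v)]_{A_p^{+,d}(\mathcal{R})}^p \mu^{-p}\, v(E\cap \bigcup_{j\in\Gamma_\mu} Q_j^+)$. -/

import Mathlib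

open MeasureTheory Set ENNReal

noncomputable section

/-- The half-open cube `∏ᵢ [aᵢ, aᵢ + h)` in `ℝⁿ`. -/
def cube {n : ℕ} (a : Fin n → ℝ) (h : ℝ) : Set (Fin n → ℝ) :=
  Set.univ.pi fun i => Set.Ico (a i) (a i + h)

/-- The forward adjacent cube `Q⁺ = ∏ᵢ [aᵢ + h, aᵢ + 2h)`. -/
def cubePlus {n : ℕ} (a : Fin n → ℝ) (h : ℝ) : Set (Fin n → ℝ) :=
  Set.univ.pi fun i => Set.Ico (a i + h) (a i + 2 * h)

/-- The dyadic cube with corner `m * 2^k` and side `2^k`. -/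
def dyCube {n : ℕ} (k : ℤ) (m : Fin n → ℤ) : Set (Fin n → ℝ) :=
  cube (fun i => (m i : ℝ) * 2 ^ k) (2 ^ k)

/-- The forward adjacent cube of a dyadic cube. -/
def dyCubePlus {n : ℕ} (k : ℤ) (m : Fin n → ℤ) : Set (Fin n → ℝ) :=
  cubePlus (fun i => (m i : ℝ) * 2 ^ k) (2 ^ k)

/-- The dyadic one-sided maximal function of the characteristic function of `E`:
`M^{+,d}(χ_E)(x) = sup { |E ∩ Q⁺| / |Q| : Q dyadic cube containing x }`. -/
def Mplusd {n : ℕ} (E : Set (Fin n → ℝ)) (x : Fin n → ℝ) : ℝ≥0∞ :=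
  ⨆ (k : ℤ) (m : Fin n → ℤ) (_ : x ∈ dyCube k m),
    volume (E ∩ dyCubePlus k m) / volume (dyCube k m)

namespace SumWAux

lemma two_zpow_pos (k : ℤ) : (0:ℝ) < 2 ^ k := zpow_pos (by norm_num) k

lemma measurableSet_cube {n : ℕ} (a : Fin n → ℝ) (h : ℝ) : MeasurableSet (cube a h) :=
  MeasurableSet.univ_pi fun _ => measurableSet_Ico

lemma volume_cube {n : ℕ} (a : Fin n → ℝ) (h : ℝ) :
    volume (cube a h) = ENNReal.ofReal h ^ n := by
  rw [cube, volume_pi_pi]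
  simp [Real.volume_Ico]

lemma volume_dyCube {n : ℕ} (k : ℤ) (m : Fin n → ℤ) :
    volume (dyCube k m) = ENNReal.ofReal ((2:ℝ) ^ k) ^ n :=
  volume_cube _ _

lemma volume_dyCube_ne_zero {n : ℕ} (k : ℤ) (m : Fin n → ℤ) : volume (dyCube k m) ≠ 0 := by
  rw [volume_dyCube]
  exact pow_ne_zero _ (ENNReal.ofReal_pos.2 (two_zpow_pos k)).ne'

lemma volume_dyCube_ne_top {n : ℕ} (k : ℤ) (m : Fin n → ℤ) : volume (dyCube k m) ≠ ∞ := by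
  rw [volume_dyCube]
  exact ENNReal.pow_ne_top ENNReal.ofReal_ne_top

lemma dyCubePlus_eq {n : ℕ} (k : ℤ) (m : Fin n → ℤ) :
    dyCubePlus k m = dyCube k (fun i => m i + 1) := by
  unfold dyCubePlus dyCube cubePlus cube
  refine congrArg _ (funext fun i => ?_)
  have h1 : (m i : ℝ) * 2 ^ k + 2 ^ k = ((m i + 1 : ℤ) : ℝ) * 2 ^ k := by push_cast; ring
  have h2 : (m i : ℝ) * 2 ^ k + 2 * 2 ^ k = ((m i + 1 : ℤ) : ℝ) * 2 ^ k + 2 ^ k := by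
    push_cast; ring
  rw [h1, h2]

lemma measurableSet_dyCubePlus {n : ℕ} (k : ℤ) (m : Fin n → ℤ) :
    MeasurableSet (dyCubePlus k m) := by
  rw [dyCubePlus_eq]; exact measurableSet_cube _ _

lemma mem_dyCube {n : ℕ} {k : ℤ} {m : Fin n → ℤ} {x : Fin n → ℝ} :
    x ∈ dyCube k m ↔ ∀ i, (m i : ℝ) * 2 ^ k ≤ x i ∧ x i < (m i : ℝ) * 2 ^ k + 2 ^ k := by
  simp [dyCube, cube, Set.mem_pi]

/-- 1-D dyadic nesting. -/
lemma Ico_nested {k k' : ℤ} (hkk : k ≤ k') (a b : ℤ) {x : ℝ}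
    (h1 : (a:ℝ) * 2 ^ k ≤ x ∧ x < (a:ℝ) * 2 ^ k + 2 ^ k)
    (h2 : (b:ℝ) * 2 ^ k' ≤ x ∧ x < (b:ℝ) * 2 ^ k' + 2 ^ k') :
    Ico ((a:ℝ) * 2 ^ k) ((a:ℝ) * 2 ^ k + 2 ^ k)
      ⊆ Ico ((b:ℝ) * 2 ^ k') ((b:ℝ) * 2 ^ k' + 2 ^ k') := by
  set D : ℤ := 2 ^ (k' - k).toNat with hD
  have hDr : (2:ℝ) ^ k' = (D:ℝ) * 2 ^ k := by
    rw [hD]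
    push_cast
    rw [← zpow_natCast (2:ℝ), Int.toNat_of_nonneg (by omega), ← zpow_add₀ (two_ne_zero)]
    congr 1
    omega
  have hpk : (0:ℝ) < 2 ^ k := two_zpow_pos k
  rw [hDr] at h2
  have hba : b * D ≤ a := by
    have h5 : ((b * D : ℤ) : ℝ) * 2 ^ k < ((a + 1 : ℤ) : ℝ) * 2 ^ k := by
      push_cast
      linarith [h2.1, h1.2]
    have := lt_of_mul_lt_mul_right h5 hpk.le
    exact_mod_cast Int.lt_add_one_iff.1 (by exact_mod_cast this)
  have hab : a + 1 ≤ b * D + D := by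
    have h5 : ((a : ℤ) : ℝ) * 2 ^ k < ((b * D + D : ℤ) : ℝ) * 2 ^ k := by
      push_cast
      linarith [h1.1, h2.2]
    have := lt_of_mul_lt_mul_right h5 hpk.le
    exact_mod_cast (by exact_mod_cast this : a < b * D + D)
  have hba' : ((b * D : ℤ) : ℝ) ≤ ((a : ℤ) : ℝ) := by exact_mod_cast hba
  have hab' : ((a + 1 : ℤ) : ℝ) ≤ ((b * D + D : ℤ) : ℝ) := by exact_mod_cast hab
  push_cast at hba' hab'
  apply Set.Ico_subset_Ico
  · rw [hDr]
    have := mul_le_mul_of_nonneg_right hba' hpk.le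
    linarith
  · rw [hDr]
    have := mul_le_mul_of_nonneg_right hab' hpk.le
    linarith

lemma dyCube_nested {n : ℕ} {k k' : ℤ} {m m' : Fin n → ℤ} (hkk : k ≤ k') {x : Fin n → ℝ}
    (h1 : x ∈ dyCube k m) (h2 : x ∈ dyCube k' m') : dyCube k m ⊆ dyCube k' m' := by
  rw [mem_dyCube] at h1 h2
  intro y hy
  rw [mem_dyCube] at hy ⊢
  intro i
  exact Ico_nested hkk (m i) (m' i) (h1 i) (h2 i) (Set.mem_Ico.2 (hy i))

lemma dyCubePlus_nested {n : ℕ} {k k' : ℤ} {m m' : Fin n → ℤ} (hkk : k ≤ k') {x : Fin n → ℝ}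
    (h1 : x ∈ dyCubePlus k m) (h2 : x ∈ dyCubePlus k' m') :
    dyCubePlus k m ⊆ dyCubePlus k' m' := by
  simp only [dyCubePlus_eq] at h1 h2 ⊢
  exact dyCube_nested hkk h1 h2

/-- If `P_i ⊆ P_j` then the back cube `Q_i` is inside the doubled cube of `Q_j`. -/
lemma back_subset_double {n : ℕ} {ki kj : ℤ} {mi mj : Fin n → ℤ}
    (hsub : dyCubePlus ki mi ⊆ dyCubePlus kj mj) :
    dyCube ki mi ⊆ cube (fun i => (mj i : ℝ) * 2 ^ kj) (2 * 2 ^ kj) := by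
  rw [dyCubePlus_eq, dyCubePlus_eq] at hsub
  unfold dyCube cube at hsub
  have hcoord : ∀ i, ((mj i + 1 : ℤ) : ℝ) * 2 ^ kj ≤ ((mi i + 1 : ℤ) : ℝ) * 2 ^ ki ∧
      ((mi i + 1 : ℤ) : ℝ) * 2 ^ ki + 2 ^ ki ≤ ((mj i + 1 : ℤ) : ℝ) * 2 ^ kj + 2 ^ kj := by
    rcases Set.univ_pi_subset_univ_pi_iff.1 hsub with h | ⟨i0, h⟩
    · intro i
      have := h i
      rw [Set.Ico_subset_Ico_iff (lt_add_of_pos_right _ (two_zpow_pos ki))] at this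
      exact this
    · exact absurd h (by
        simp only [Set.Ico_eq_empty_iff, not_not]
        exact lt_add_of_pos_right _ (two_zpow_pos ki))
  intro y hy
  rw [mem_dyCube] at hy
  intro i _
  have h1 := (hcoord i).1
  have h2 := (hcoord i).2
  have h3 := (hy i).1
  have h4 := (hy i).2
  push_cast at h1 h2
  have hki : (2:ℝ) ^ ki ≤ 2 ^ kj := by linarith
  simp only [Set.mem_Ico]
  constructor
  · linarith
  · linarith

open Classical in
lemma key {n : ℕ} (p K μ : ℝ) (hp : 1 ≤ p) (hμ : 0 < μ)
    (w v : (Fin n → ℝ) → ℝ≥0∞) (hv : Measurable v)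
    {ι : Type*} [Countable ι] (Q P : ι → Set (Fin n → ℝ)) (sz : ι → ℤ)
    (hPm : ∀ j, MeasurableSet (P j))
    (hQ0 : ∀ j, volume (Q j) ≠ 0) (hQt : ∀ j, volume (Q j) ≠ ∞)
    (hnest : ∀ i j (x : Fin n → ℝ), x ∈ P i → x ∈ P j → sz i ≤ sz j → P i ⊆ P j)
    (hback : ∀ j, (∑' i, if P i ⊆ P j then volume (Q i) else 0) ≤ 2 ^ n * volume (Q j))
    (hap : ∀ j, ∀ F ⊆ P j, MeasurableSet F →
      volume F / volume (Q j)
        ≤ ENNReal.ofReal K * ((∫⁻ x in F, v x) / ∫⁻ x in Q j, w x) ^ (1 / p))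
    (E : Set (Fin n → ℝ)) (hE : MeasurableSet E)
    (hlow : ∀ j, ENNReal.ofReal μ * volume (Q j) < volume (E ∩ P j))
    (hhigh : ∀ j, volume (E ∩ P j) ≤ 2 * ENNReal.ofReal μ * volume (Q j)) :
    ∑' j, ∫⁻ x in Q j, w x
      ≤ 2 ^ (n + 2) * (2:ℝ≥0∞) ^ p * ENNReal.ofReal K ^ p / ENNReal.ofReal μ ^ p *
        ∫⁻ x in E ∩ ⋃ j, P j, v x := by
  classical
  have hppos : (0:ℝ) < p := lt_of_lt_of_le one_pos hp
  have hp0 : p ≠ 0 := hppos.ne'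
  set T : ℝ≥0∞ := 2 ^ (n + 2) with hT
  set A : ι → Set (Fin n → ℝ) := fun j => E ∩ P j with hA
  set N : ι → (Fin n → ℝ) → ℝ≥0∞ :=
    fun j x => ∑' i, (if P i ⊆ P j then P i else ∅).indicator (1 : (Fin n → ℝ) → ℝ≥0∞) x
    with hNdef
  have hitemeas : ∀ j i, MeasurableSet (if P i ⊆ P j then P i else ∅) := by
    intro j i; split_ifs; exacts [hPm i, MeasurableSet.empty]
  have hNmeas : ∀ j, Measurable (N j) := fun j =>
    Measurable.ennreal_tsum fun i => measurable_const.indicator (hitemeas j i)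
  have hAmeas : ∀ j, MeasurableSet (A j) := fun j => hE.inter (hPm j)
  -- the F-sets
  set F : ι → Set (Fin n → ℝ) := fun j => A j ∩ {x | N j x < T} with hFdef
  have hFmeas : ∀ j, MeasurableSet (F j) := fun j =>
    (hAmeas j).inter (measurableSet_lt (hNmeas j) measurable_const)
  -- Step A : ∫_{A j} N j ≤ 2 μ 2^n |Q j|
  have hintN : ∀ j, ∫⁻ x in A j, N j x ≤ 2 * ENNReal.ofReal μ * (2 ^ n * volume (Q j)) := by
    intro j
    have hsplit : ∫⁻ x in A j, N j x
        = ∑' i, ∫⁻ x in A j,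
            (if P i ⊆ P j then P i else ∅).indicator (1 : (Fin n → ℝ) → ℝ≥0∞) x := by
      simp only [hNdef]
      exact lintegral_tsum fun i => (measurable_const.indicator (hitemeas j i)).aemeasurable
    rw [hsplit]
    have hterm : ∀ i, ∫⁻ x in A j,
        (if P i ⊆ P j then P i else ∅).indicator (1 : (Fin n → ℝ) → ℝ≥0∞) x
        ≤ (if P i ⊆ P j then 2 * ENNReal.ofReal μ * volume (Q i) else 0) := by
      intro i
      rw [lintegral_indicator_one (hitemeas j i),
        Measure.restrict_apply (hitemeas j i)]
      split_ifs with hij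
      · calc volume (P i ∩ A j) ≤ volume (E ∩ P i) := by
              apply measure_mono
              intro x hx
              exact ⟨hx.2.1, hx.1⟩
          _ ≤ 2 * ENNReal.ofReal μ * volume (Q i) := hhigh i
      · simp
    calc (∑' i, ∫⁻ x in A j,
            (if P i ⊆ P j then P i else ∅).indicator (1 : (Fin n → ℝ) → ℝ≥0∞) x)
        ≤ ∑' i, (if P i ⊆ P j then 2 * ENNReal.ofReal μ * volume (Q i) else 0) :=
          ENNReal.tsum_le_tsum hterm
      _ = 2 * ENNReal.ofReal μ * ∑' i, (if P i ⊆ P j then volume (Q i) else 0) := by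
          rw [← ENNReal.tsum_mul_left]
          refine tsum_congr fun i => ?_
          split_ifs <;> simp
      _ ≤ 2 * ENNReal.ofReal μ * (2 ^ n * volume (Q j)) := mul_le_mul_right (hback j) _
  -- Chebyshev
  have hcheb : ∀ j, 2 * volume ({x | T ≤ N j x} ∩ A j) ≤ ENNReal.ofReal μ * volume (Q j) := by
    intro j
    have h1 : T * (volume.restrict (A j)) {x | T ≤ N j x} ≤ ∫⁻ x in A j, N j x :=
      mul_meas_ge_le_lintegral₀ (hNmeas j).aemeasurable T
    rw [Measure.restrict_apply (measurableSet_le measurable_const (hNmeas j))] at h1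
    have h2 := h1.trans (hintN j)
    have h3 : (2:ℝ≥0∞) ^ (n + 1) * (2 * volume ({x | T ≤ N j x} ∩ A j))
        ≤ 2 ^ (n + 1) * (ENNReal.ofReal μ * volume (Q j)) := by
      calc (2:ℝ≥0∞) ^ (n + 1) * (2 * volume ({x | T ≤ N j x} ∩ A j))
          = T * volume ({x | T ≤ N j x} ∩ A j) := by rw [hT]; ring
        _ ≤ 2 * ENNReal.ofReal μ * (2 ^ n * volume (Q j)) := h2
        _ = 2 ^ (n + 1) * (ENNReal.ofReal μ * volume (Q j)) := by ring
    exact (ENNReal.mul_le_mul_iff_right (pow_ne_zero _ two_ne_zero)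
      (ENNReal.pow_ne_top ENNReal.ofNat_ne_top)).1 h3
  -- |F j| > μ|Q j|/2
  have hFvol : ∀ j, ENNReal.ofReal μ * volume (Q j) < 2 * volume (F j) := by
    intro j
    have hsub : A j ⊆ F j ∪ ({x | T ≤ N j x} ∩ A j) := by
      intro x hx
      rcases lt_or_ge (N j x) T with h | h
      · exact Or.inl ⟨hx, h⟩
      · exact Or.inr ⟨h, hx⟩
    have h5 : volume (A j) ≤ volume (F j) + volume ({x | T ≤ N j x} ∩ A j) :=
      (measure_mono hsub).trans (measure_union_le _ _)
    have h6 : ENNReal.ofReal μ * volume (Q j)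
        < volume (F j) + volume ({x | T ≤ N j x} ∩ A j) := lt_of_lt_of_le (hlow j) h5
    have h7 : ENNReal.ofReal μ * volume (Q j) + ENNReal.ofReal μ * volume (Q j)
        < 2 * volume (F j) + ENNReal.ofReal μ * volume (Q j) := by
      calc ENNReal.ofReal μ * volume (Q j) + ENNReal.ofReal μ * volume (Q j)
          < (volume (F j) + volume ({x | T ≤ N j x} ∩ A j))
            + (volume (F j) + volume ({x | T ≤ N j x} ∩ A j)) := ENNReal.add_lt_add h6 h6
        _ = 2 * volume (F j) + 2 * volume ({x | T ≤ N j x} ∩ A j) := by ring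
        _ ≤ 2 * volume (F j) + ENNReal.ofReal μ * volume (Q j) :=
            add_le_add_right (hcheb j) _
    exact (ENNReal.add_lt_add_iff_right
      (ENNReal.mul_ne_top ENNReal.ofReal_ne_top (hQt j))).1 h7
  -- A_p step
  have hkey : ∀ j, ENNReal.ofReal μ ^ p * ∫⁻ x in Q j, w x
      ≤ (2:ℝ≥0∞) ^ p * ENNReal.ofReal K ^ p * ∫⁻ x in F j, v x := by
    intro j
    have hFP : F j ⊆ P j := fun x hx => hx.1.2
    have h8 := hap j (F j) hFP (hFmeas j)
    have h9 : ENNReal.ofReal μ < 2 * (volume (F j) / volume (Q j)) := by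
      have h10 : ENNReal.ofReal μ < 2 * volume (F j) / volume (Q j) := by
        rw [ENNReal.lt_div_iff_mul_lt (Or.inl (hQ0 j)) (Or.inl (hQt j))]
        exact hFvol j
      rwa [mul_div_assoc] at h10
    have h11 : ENNReal.ofReal μ
        ≤ 2 * (ENNReal.ofReal K * ((∫⁻ x in F j, v x) / ∫⁻ x in Q j, w x) ^ (1 / p)) :=
      h9.le.trans (mul_le_mul_right h8 2)
    have h12 := ENNReal.rpow_le_rpow h11 hppos.le
    rw [ENNReal.mul_rpow_of_nonneg _ _ hppos.le, ENNReal.mul_rpow_of_nonneg _ _ hppos.le,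
      ← ENNReal.rpow_mul, one_div, inv_mul_cancel₀ hp0, ENNReal.rpow_one] at h12
    have h13 : ENNReal.ofReal μ ^ p
        ≤ ((2:ℝ≥0∞) ^ p * ENNReal.ofReal K ^ p * ∫⁻ x in F j, v x) / ∫⁻ x in Q j, w x := by
      refine h12.trans (le_of_eq ?_)
      rw [div_eq_mul_inv, div_eq_mul_inv]
      ring
    exact ENNReal.mul_le_of_le_div h13
  -- overlap bound
  have hFsubU : ∀ j, F j ⊆ E ∩ ⋃ i, P i := fun j x hx =>
    ⟨hx.1.1, Set.mem_iUnion.2 ⟨j, hx.1.2⟩⟩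
  have hover : ∀ x, (∑' j, (F j).indicator (1 : (Fin n → ℝ) → ℝ≥0∞) x) ≤ T := by
    intro x
    rw [ENNReal.tsum_eq_iSup_sum]
    refine iSup_le fun s => ?_
    have hrw : ∀ j ∈ s, (F j).indicator (1 : (Fin n → ℝ) → ℝ≥0∞) x
        = if x ∈ F j then 1 else 0 := fun j _ => Set.indicator_apply _ _ _
    rw [Finset.sum_congr rfl hrw, Finset.sum_boole]
    by_cases hne : (s.filter fun j => x ∈ F j).Nonempty
    · obtain ⟨j0, hj0, hmax⟩ := Finset.exists_max_image _ sz hne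
      have hmem : ∀ i ∈ s.filter fun j => x ∈ F j, x ∈ P i := fun i hi =>
        ((Finset.mem_filter.1 hi).2).1.2
      have hsubs : ∀ i ∈ s.filter fun j => x ∈ F j, P i ⊆ P j0 := fun i hi =>
        hnest i j0 x (hmem i hi) (hmem j0 hj0) (hmax i hi)
      have hNge : (((s.filter fun j => x ∈ F j).card : ℕ) : ℝ≥0∞) ≤ N j0 x := by
        have hone : ∀ i ∈ s.filter fun j => x ∈ F j,
            (1:ℝ≥0∞) ≤ (if P i ⊆ P j0 then P i else ∅).indicator
              (1 : (Fin n → ℝ) → ℝ≥0∞) x := by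
          intro i hi
          rw [if_pos (hsubs i hi), Set.indicator_of_mem (hmem i hi), Pi.one_apply]
        calc (((s.filter fun j => x ∈ F j).card : ℕ) : ℝ≥0∞)
            = ∑ _i ∈ s.filter fun j => x ∈ F j, (1:ℝ≥0∞) := by simp
          _ ≤ ∑ i ∈ s.filter fun j => x ∈ F j,
              (if P i ⊆ P j0 then P i else ∅).indicator (1 : (Fin n → ℝ) → ℝ≥0∞) x :=
            Finset.sum_le_sum hone
          _ ≤ N j0 x := ENNReal.sum_le_tsum _
      have hNlt : N j0 x < T := ((Finset.mem_filter.1 hj0).2).2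
      exact (hNge.trans_lt hNlt).le
    · rw [Finset.not_nonempty_iff_eq_empty.1 hne]
      simp
  -- sum of v(F j)
  have hsum2 : (∑' j, ∫⁻ x in F j, v x) ≤ T * ∫⁻ x in E ∩ ⋃ i, P i, v x := by
    have h15 : ∀ j, ∫⁻ x in F j, v x = ∫⁻ x, (F j).indicator v x :=
      fun j => (lintegral_indicator (hFmeas j) v).symm
    rw [tsum_congr h15, ← lintegral_tsum fun j => (hv.indicator (hFmeas j)).aemeasurable]
    have h16 : ∀ x, (∑' j, (F j).indicator v x)
        ≤ (E ∩ ⋃ i, P i).indicator (fun x => T * v x) x := by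
      intro x
      by_cases hx : x ∈ E ∩ ⋃ i, P i
      · rw [Set.indicator_of_mem hx]
        have hdec : ∀ j, (F j).indicator v x
            = (F j).indicator (1 : (Fin n → ℝ) → ℝ≥0∞) x * v x := by
          intro j
          by_cases hj : x ∈ F j <;> simp [Set.indicator_apply, hj]
        rw [tsum_congr hdec, ENNReal.tsum_mul_right]
        exact mul_le_mul_left (hover x) (v x)
      · rw [Set.indicator_of_notMem hx]
        have hz : ∀ j, (F j).indicator v x = 0 := fun j =>
          Set.indicator_of_notMem (fun hmem => hx (hFsubU j hmem)) v
        rw [tsum_congr hz]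
        simp
    calc ∫⁻ x, ∑' j, (F j).indicator v x
        ≤ ∫⁻ x, (E ∩ ⋃ i, P i).indicator (fun x => T * v x) x := lintegral_mono h16
      _ = ∫⁻ x in E ∩ ⋃ i, P i, T * v x :=
          lintegral_indicator (hE.inter (MeasurableSet.iUnion fun i => hPm i)) _
      _ = T * ∫⁻ x in E ∩ ⋃ i, P i, v x := lintegral_const_mul T hv
  -- assemble
  have hc0 : ENNReal.ofReal μ ^ p ≠ 0 :=
    (ENNReal.rpow_pos (ENNReal.ofReal_pos.2 hμ) ENNReal.ofReal_ne_top).ne'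
  have hct : ENNReal.ofReal μ ^ p ≠ ∞ :=
    ENNReal.rpow_ne_top_of_nonneg hppos.le ENNReal.ofReal_ne_top
  have hfinal : ENNReal.ofReal μ ^ p * ∑' j, ∫⁻ x in Q j, w x
      ≤ (2:ℝ≥0∞) ^ p * ENNReal.ofReal K ^ p * (T * ∫⁻ x in E ∩ ⋃ i, P i, v x) := by
    calc ENNReal.ofReal μ ^ p * ∑' j, ∫⁻ x in Q j, w x
        = ∑' j, ENNReal.ofReal μ ^ p * ∫⁻ x in Q j, w x := ENNReal.tsum_mul_left.symm
      _ ≤ ∑' j, (2:ℝ≥0∞) ^ p * ENNReal.ofReal K ^ p * ∫⁻ x in F j, v x :=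
          ENNReal.tsum_le_tsum hkey
      _ = (2:ℝ≥0∞) ^ p * ENNReal.ofReal K ^ p * ∑' j, ∫⁻ x in F j, v x :=
          ENNReal.tsum_mul_left
      _ ≤ (2:ℝ≥0∞) ^ p * ENNReal.ofReal K ^ p * (T * ∫⁻ x in E ∩ ⋃ i, P i, v x) :=
          mul_le_mul_right hsum2 _
  have h20 : ∑' j, ∫⁻ x in Q j, w x
      ≤ ((2:ℝ≥0∞) ^ p * ENNReal.ofReal K ^ p * (T * ∫⁻ x in E ∩ ⋃ i, P i, v x))
        / ENNReal.ofReal μ ^ p := by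
    rw [ENNReal.le_div_iff_mul_le (Or.inl hc0) (Or.inl hct)]
    rw [mul_comm]
    exact hfinal
  refine h20.trans (le_of_eq ?_)
  rw [hT, div_eq_mul_inv, div_eq_mul_inv]
  ring

end SumWAux

/-- Lemma 3.1: if `(w,v) ∈ A_p^{+,d}(𝓡)` with constant `K`, `μ > 0`, and `{Q_j}` is a
pairwise disjoint family of dyadic cubes with `μ < |E ∩ Q_j⁺|/|Q_j| ≤ 2μ`, then
`∑_j w(Q_j) ≤ 2^(n+p+2) K^p μ⁻ᵖ v(E ∩ ⋃_j Q_j⁺)`. -/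
theorem sum_w_Qj_le {n : ℕ} (p K μ : ℝ) (hp : 1 ≤ p) (hK : 0 ≤ K) (hμ : 0 < μ)
    (w v : (Fin n → ℝ) → ℝ≥0∞) (hw : Measurable w) (hv : Measurable v)
    (hApd : ∀ (k : ℤ) (m : Fin n → ℤ), ∀ F ⊆ dyCubePlus k m, MeasurableSet F →
      volume F / volume (dyCube k m)
        ≤ ENNReal.ofReal K *
          ((∫⁻ x in F, v x) / ∫⁻ x in dyCube k m, w x) ^ (1 / p))
    (E : Set (Fin n → ℝ)) (hE : MeasurableSet E)
    (hE0 : 0 < volume E) (hEfin : volume E < ∞)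
    {ι : Type*} [Countable ι] (k : ι → ℤ) (m : ι → Fin n → ℤ)
    (hdisj : Pairwise fun i j => Disjoint (dyCube (k i) (m i)) (dyCube (k j) (m j)))
    (hlow : ∀ j, ENNReal.ofReal μ
      < volume (E ∩ dyCubePlus (k j) (m j)) / volume (dyCube (k j) (m j)))
    (hhigh : ∀ j, volume (E ∩ dyCubePlus (k j) (m j)) / volume (dyCube (k j) (m j))
      ≤ 2 * ENNReal.ofReal μ) :
    ∑' j, ∫⁻ x in dyCube (k j) (m j), w x
      ≤ ENNReal.ofReal (2 ^ ((n : ℝ) + p + 2)) * ENNReal.ofReal K ^ p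
          / ENNReal.ofReal μ ^ p *
        ∫⁻ x in E ∩ ⋃ j, dyCubePlus (k j) (m j), v x := by
  classical
  have hQ0 : ∀ j, volume (dyCube (k j) (m j)) ≠ 0 := fun j =>
    SumWAux.volume_dyCube_ne_zero _ _
  have hQt : ∀ j, volume (dyCube (k j) (m j)) ≠ ∞ := fun j =>
    SumWAux.volume_dyCube_ne_top _ _
  -- convert hlow / hhigh
  have hlow' : ∀ j, ENNReal.ofReal μ * volume (dyCube (k j) (m j))
      < volume (E ∩ dyCubePlus (k j) (m j)) := by
    intro j
    have h2 := (ENNReal.mul_lt_mul_iff_left (hQ0 j) (hQt j)).2 (hlow j)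
    rwa [ENNReal.div_mul_cancel (hQ0 j) (hQt j)] at h2
  have hhigh' : ∀ j, volume (E ∩ dyCubePlus (k j) (m j))
      ≤ 2 * ENNReal.ofReal μ * volume (dyCube (k j) (m j)) := fun j =>
    (ENNReal.div_le_iff_le_mul (Or.inl (hQ0 j)) (Or.inl (hQt j))).1 (hhigh j)
  -- back-volume estimate
  have hback : ∀ j, (∑' i, if dyCubePlus (k i) (m i) ⊆ dyCubePlus (k j) (m j)
        then volume (dyCube (k i) (m i)) else 0)
      ≤ 2 ^ n * volume (dyCube (k j) (m j)) := by
    intro j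
    have hmeas' : ∀ i, MeasurableSet (if dyCubePlus (k i) (m i) ⊆ dyCubePlus (k j) (m j)
        then dyCube (k i) (m i) else ∅) := by
      intro i; split_ifs
      exacts [SumWAux.measurableSet_cube _ _, MeasurableSet.empty]
    have hdisj' : Pairwise (Function.onFun Disjoint fun i =>
        if dyCubePlus (k i) (m i) ⊆ dyCubePlus (k j) (m j)
        then dyCube (k i) (m i) else ∅) := by
      intro a b hab
      have hd := hdisj hab
      simp only [Function.onFun]
      split_ifs
      · exact hd
      · exact Disjoint.mono_right (Set.empty_subset _) disjoint_bot_right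
      · exact Disjoint.mono_left (Set.empty_subset _) disjoint_bot_left
      · exact Disjoint.mono_left (Set.empty_subset _) disjoint_bot_left
    calc (∑' i, if dyCubePlus (k i) (m i) ⊆ dyCubePlus (k j) (m j)
            then volume (dyCube (k i) (m i)) else 0)
        = ∑' i, volume (if dyCubePlus (k i) (m i) ⊆ dyCubePlus (k j) (m j)
            then dyCube (k i) (m i) else ∅) := by
          refine tsum_congr fun i => ?_
          split_ifs <;> simp
      _ = volume (⋃ i, if dyCubePlus (k i) (m i) ⊆ dyCubePlus (k j) (m j)
            then dyCube (k i) (m i) else ∅) := (measure_iUnion hdisj' hmeas').symm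
      _ ≤ volume (cube (fun t => (m j t : ℝ) * 2 ^ (k j)) (2 * 2 ^ (k j))) := by
          apply measure_mono
          refine Set.iUnion_subset fun i => ?_
          split_ifs with h
          · exact SumWAux.back_subset_double h
          · exact Set.empty_subset _
      _ = 2 ^ n * volume (dyCube (k j) (m j)) := by
          rw [SumWAux.volume_cube, SumWAux.volume_dyCube,
            ENNReal.ofReal_mul (by norm_num : (0:ℝ) ≤ 2), mul_pow]
          norm_num
  have hmain := SumWAux.key p K μ hp hμ w v hv
    (fun j => dyCube (k j) (m j)) (fun j => dyCubePlus (k j) (m j)) k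
    (fun j => SumWAux.measurableSet_dyCubePlus _ _) hQ0 hQt
    (fun i j x hxi hxj hk => SumWAux.dyCubePlus_nested hk hxi hxj)
    hback
    (fun j => hApd (k j) (m j))
    E hE hlow' hhigh'
  refine hmain.trans (le_of_eq ?_)
  have hcoef : (2:ℝ≥0∞) ^ (n + 2) * (2:ℝ≥0∞) ^ p
      = ENNReal.ofReal (2 ^ ((n : ℝ) + p + 2)) := by
    rw [← ENNReal.ofReal_rpow_of_pos (by norm_num : (0:ℝ) < 2), ENNReal.ofReal_ofNat,
      show ((n : ℝ) + p + 2) = (((n + 2 : ℕ) : ℝ)) + p by push_cast; ring,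
      ENNReal.rpow_add _ _ (by norm_num) ENNReal.ofNat_ne_top, ENNReal.rpow_natCast]
  rw [hcoef]
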